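/- For each n with 1 ≤ n ≤ p, the chambers x₁C and x_nC lie on the same side of H_n (no point of x₁C is separated from a point of x_nC by H_n), while H_n separates x₁C and x_n s_{i_n}C. -/

import Mathlib

noncomputable section

namespace PaperBound

variable {B : Type} {W : Type} [Group W]

/-- The value `B(α_i, α_j)` of the canonical symmetric bilinear form on simple roots:
`-cos (π / m i j)` if `m i j ≠ ∞` (encoded as `M i j ≠ 0`) and `-1` otherwise. -/
def cB (M : CoxeterMatrix B) (i j : B) : ℝ :=
  if M i j = 0 then -1 else - Real.cos (Real.pi / (M i j : ℝ))

/-- The canonical symmetric bilinear form on `V = B → ℝ` (coordinates in the basis of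
simple roots `Δ = {α_i}`). -/
def bform [Fintype B] (M : CoxeterMatrix B) (u v : B → ℝ) : ℝ :=
  ∑ i, ∑ j, u i * v j * cB M i j

/-- The natural pairing `⟨-,-⟩ : V* × V → ℝ`, where both `V` and `V*` are modelled as
`B → ℝ` (coordinates of `V*` taken in the dual basis of `Δ`). -/
def pair [Fintype B] (f v : B → ℝ) : ℝ := ∑ i, f i * v i

/-- The simple root `α_i ∈ V`. -/
def sroot [DecidableEq B] (i : B) : B → ℝ := Pi.single i 1

/-- `ρ` is the geometric representation of `W` on `V = B → ℝ`:
`s_i · v = v - 2 B(α_i, v) α_i`. -/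
def IsGeomRep [Fintype B] [DecidableEq B] (M : CoxeterMatrix B) (cs : CoxeterSystem M W)
    (ρ : W →* (B → ℝ) ≃ₗ[ℝ] (B → ℝ)) : Prop :=
  ∀ (i : B) (v : B → ℝ), ρ (cs.simple i) v = v - (2 * bform M (sroot i) v) • sroot i

/-- `π` is the contragredient representation of `W` on `V* = B → ℝ`:
`⟨w·f, w·v⟩ = ⟨f, v⟩`. -/
def IsContraRep [Fintype B] (ρ : W →* (B → ℝ) ≃ₗ[ℝ] (B → ℝ))
    (π : W →* (B → ℝ) ≃ₗ[ℝ] (B → ℝ)) : Prop :=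
  ∀ (w : W) (f v : B → ℝ), pair (π w f) (ρ w v) = pair f v

/-- The set `Φ⁺` of positive roots: roots (elements of the orbit of the simple roots)
all of whose coordinates in the basis `Δ` are nonnegative. -/
def PhiPos [Fintype B] [DecidableEq B] (ρ : W →* (B → ℝ) ≃ₗ[ℝ] (B → ℝ)) : Set (B → ℝ) :=
  {α | (∃ (w : W) (i : B), α = ρ w (sroot i)) ∧ ∀ j, 0 ≤ α j}

/-- The hyperplane `H_α = {f ∈ V* : ⟨f, α⟩ = 0}`. -/
def hyp [Fintype B] (α : B → ℝ) : Set (B → ℝ) := {f | pair f α = 0}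

/-- The set `𝔓 = {H_α : α ∈ Φ⁺}` of hyperplanes. -/
def Planes [Fintype B] [DecidableEq B] (ρ : W →* (B → ℝ) ≃ₗ[ℝ] (B → ℝ)) :
    Set (Set (B → ℝ)) :=
  {H | ∃ α ∈ PhiPos (W := W) ρ, H = hyp α}

/-- The (open) dominant chamber `C = {f ∈ V* : ⟨f, α_i⟩ > 0 for all i}`. -/
def domCham (B : Type) [Fintype B] [DecidableEq B] : Set (B → ℝ) :=
  {f | ∀ i : B, 0 < pair f (sroot i)}

/-- The Tits cone `U = ⋃_{w ∈ W} w · (closure of C)`. -/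
def titsCone [Fintype B] [DecidableEq B] (π : W →* (B → ℝ) ≃ₗ[ℝ] (B → ℝ)) :
    Set (B → ℝ) :=
  ⋃ w : W, (π w) '' closure (domCham B)

/-- `A ⩀ B := A ∩ B ∩ U°`, where `U°` is the interior of the Tits cone. -/
def dcap [Fintype B] [DecidableEq B] (π : W →* (B → ℝ) ≃ₗ[ℝ] (B → ℝ))
    (A A' : Set (B → ℝ)) : Set (B → ℝ) :=
  A ∩ A' ∩ interior (titsCone π)

/-- A set `𝔔` of hyperplanes is intersecting if `H₁ ⩀ H₂ ≠ ∅` for all `H₁, H₂ ∈ 𝔔`. -/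
def Intersecting [Fintype B] [DecidableEq B] (π : W →* (B → ℝ) ≃ₗ[ℝ] (B → ℝ))
    (Q : Set (Set (B → ℝ))) : Prop :=
  ∀ H₁ ∈ Q, ∀ H₂ ∈ Q, (dcap π H₁ H₂).Nonempty

/-- The chamber `wC ⊆ V*`. -/
def cham [Fintype B] [DecidableEq B] (π : W →* (B → ℝ) ≃ₗ[ℝ] (B → ℝ)) (w : W) :
    Set (B → ℝ) :=
  (π w) '' domCham B

/-- The hyperplane with root `α` separates `f, g ∈ V*`: `⟨f, α⟩⟨g, α⟩ < 0`. -/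
def SepPt [Fintype B] (α f g : B → ℝ) : Prop := pair f α * pair g α < 0

/-- The hyperplane with root `α` separates the subsets `A, A'` of `V*`: every point of
`A ∪ A'` lies off the hyperplane, and every point of `A` is separated from every point
of `A'`. -/
def SepSets [Fintype B] (α : B → ℝ) (A A' : Set (B → ℝ)) : Prop :=
  (∀ f ∈ A ∪ A', pair f α ≠ 0) ∧ ∀ f ∈ A, ∀ g ∈ A', SepPt α f g

/-- The subset `A ⊆ V*` lies entirely on one side of the hyperplane with root `α`. -/
def OneSide [Fintype B] (α : B → ℝ) (A : Set (B → ℝ)) : Prop :=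
  (∀ f ∈ A, pair f α ≠ 0) ∧ ∀ f ∈ A, ∀ g ∈ A, ¬ SepPt α f g

/-- The hyperplane `H ∈ 𝔓` separates the subsets `A, A'` of `V*` (expressed via a
positive root `α` with `H = H_α`; this does not depend on the choice of `α`). -/
def SepSetsH [Fintype B] [DecidableEq B] (ρ : W →* (B → ℝ) ≃ₗ[ℝ] (B → ℝ))
    (H : Set (B → ℝ)) (A A' : Set (B → ℝ)) : Prop :=
  ∃ α ∈ PhiPos (W := W) ρ, H = hyp α ∧ SepSets α A A'


/-- The open half-space bounded by the hyperplane with root `α` on the side not containing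
the chamber `wC`. -/
def halfNeg [Fintype B] [DecidableEq B] (π : W →* (B → ℝ) ≃ₗ[ℝ] (B → ℝ)) (w : W)
    (α : B → ℝ) : Set (B → ℝ) :=
  {f | ∀ f₀ ∈ cham π w, pair f α * pair f₀ α < 0}

/-- Auxiliary recursion producing the sets `𝔄_i` (first component) together with the
cumulative unions `𝔄₀ ∪ ⋯ ∪ 𝔄_i` (second component), starting from `𝔄₀ = A0`:
`𝔄_{i+1} = {P ∈ Q ∖ (𝔄₀ ∪ ⋯ ∪ 𝔄_i) : P ⩀ σ(R) = ∅ for some R ∈ 𝔄_i}`. -/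
def AseqAux [Fintype B] [DecidableEq B] (π : W →* (B → ℝ) ≃ₗ[ℝ] (B → ℝ))
    (Q : Set (Set (B → ℝ))) (σ : W) (A0 : Set (Set (B → ℝ))) :
    ℕ → Set (Set (B → ℝ)) × Set (Set (B → ℝ))
  | 0 => (A0, A0)
  | i + 1 =>
    let prev := AseqAux π Q σ A0 i
    ({P | P ∈ Q ∧ P ∉ prev.2 ∧ ∃ R ∈ prev.1, dcap π P ((π σ) '' R) = ∅},
      prev.2 ∪ {P | P ∈ Q ∧ P ∉ prev.2 ∧ ∃ R ∈ prev.1, dcap π P ((π σ) '' R) = ∅})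

/-- The set `𝔄_i`. -/
def Aseq [Fintype B] [DecidableEq B] (π : W →* (B → ℝ) ≃ₗ[ℝ] (B → ℝ))
    (Q : Set (Set (B → ℝ))) (σ : W) (A0 : Set (Set (B → ℝ))) (i : ℕ) :
    Set (Set (B → ℝ)) :=
  (AseqAux π Q σ A0 i).1

/-- `ccos m = cos (π/m)`, with the convention `ccos 0 = 1`. -/
def ccos (m : ℕ) : ℝ := if m = 0 then 1 else Real.cos (Real.pi / m)

/-- Normalized Chebyshev-like function `S_q = sin(qπ/m)/sin(π/m)`, `= q` if `m = 0`. -/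
def chebS (m : ℕ) (q : ℕ) : ℝ :=
  if m = 0 then q else Real.sin (q * (Real.pi / m)) / Real.sin (Real.pi / m)

lemma cB_eq (M : CoxeterMatrix B) (i j : B) : cB M i j = - ccos (M i j) := by
  unfold cB ccos; split <;> simp

lemma cB_diag (M : CoxeterMatrix B) (i : B) : cB M i i = 1 := by
  unfold cB; rw [M.diagonal]; norm_num

lemma cB_symm (M : CoxeterMatrix B) (i j : B) : cB M i j = cB M j i := by
  unfold cB; rw [M.symmetric]

lemma sin_base_pos {m : ℕ} (hm : 2 ≤ m) : 0 < Real.sin (Real.pi / m) := by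
  apply Real.sin_pos_of_pos_of_lt_pi
  · positivity
  · have h2 : (2:ℝ) ≤ m := by exact_mod_cast hm
    rw [div_lt_iff₀ (by positivity)]
    nlinarith [Real.pi_pos]

lemma chebS_zero (m : ℕ) : chebS m 0 = 0 := by unfold chebS; split <;> simp

lemma chebS_one {m : ℕ} (hm : m = 0 ∨ 2 ≤ m) : chebS m 1 = 1 := by
  unfold chebS
  rcases hm with h | h
  · simp [h]
  · rw [if_neg (by omega)]
    simp [div_self (sin_base_pos h).ne']

lemma chebS_nonneg {m q : ℕ} (hm : m = 0 ∨ 2 ≤ m) (hq : m = 0 ∨ q ≤ m) :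
    0 ≤ chebS m q := by
  unfold chebS
  rcases hm with h | h
  · simp [h]
  · rw [if_neg (by omega)]
    apply div_nonneg _ (sin_base_pos h).le
    apply Real.sin_nonneg_of_nonneg_of_le_pi
    · positivity
    · rcases hq with h0 | hq
      · omega
      · calc (q:ℝ) * (Real.pi / m) ≤ m * (Real.pi / m) := by
              apply mul_le_mul_of_nonneg_right (by exact_mod_cast hq) (by positivity)
          _ = Real.pi := by field_simp

lemma chebS_rec {m : ℕ} (hm : m = 0 ∨ 2 ≤ m) (q : ℕ) :
    chebS m (q + 2) = 2 * ccos m * chebS m (q + 1) - chebS m q := by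
  unfold chebS ccos
  rcases hm with h | h
  · simp [h]; ring
  · rw [if_neg (by omega), if_neg (by omega), if_neg (by omega), if_neg (by omega)]
    have key : Real.sin ((q + 2 : ℕ) * (Real.pi / m)) =
        2 * Real.cos (Real.pi / m) * Real.sin ((q + 1 : ℕ) * (Real.pi / m))
          - Real.sin ((q : ℕ) * (Real.pi / m)) := by
      have e1 : ((q + 2 : ℕ) : ℝ) * (Real.pi / m)
          = ((q + 1 : ℕ) : ℝ) * (Real.pi / m) + Real.pi / m := by push_cast; ring
      have e2 : ((q : ℕ) : ℝ) * (Real.pi / m)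
          = ((q + 1 : ℕ) : ℝ) * (Real.pi / m) - Real.pi / m := by push_cast; ring
      rw [e1, e2, Real.sin_add, Real.sin_sub]; ring
    rw [key]; ring


section Alg
variable [Fintype B] [DecidableEq B]

lemma pair_sroot (f : B → ℝ) (i : B) : pair f (sroot i) = f i := by
  unfold pair sroot
  rw [Finset.sum_eq_single i]
  · simp
  · intro b _ hb; simp [Pi.single_apply, hb]
  · simp

lemma pair_add (f u v : B → ℝ) : pair f (u + v) = pair f u + pair f v := by
  unfold pair; rw [← Finset.sum_add_distrib]; congr 1; funext x; simp; ring

lemma pair_smul (f : B → ℝ) (c : ℝ) (v : B → ℝ) : pair f (c • v) = c * pair f v := by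
  unfold pair; rw [Finset.mul_sum]; congr 1; funext x; simp; ring

lemma pair_neg (f v : B → ℝ) : pair f (-v) = - pair f v := by
  unfold pair; rw [← Finset.sum_neg_distrib]; congr 1; funext x; simp

lemma bform_sroot_left (M : CoxeterMatrix B) (i : B) (v : B → ℝ) :
    bform M (sroot i) v = ∑ b, v b * cB M i b := by
  unfold bform sroot
  rw [Finset.sum_eq_single i]
  · congr 1; funext b; simp
  · intro b _ hb
    apply Finset.sum_eq_zero; intro c _; simp [Pi.single_apply, hb]
  · simp

lemma bform_sroot_sroot (M : CoxeterMatrix B) (i j : B) :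
    bform M (sroot i) (sroot j) = cB M i j := by
  rw [bform_sroot_left]
  rw [Finset.sum_eq_single j]
  · simp [sroot]
  · intro b _ hb; simp [sroot, Pi.single_apply, hb]
  · simp

lemma bform_right_add (M : CoxeterMatrix B) (f u v : B → ℝ) :
    bform M f (u + v) = bform M f u + bform M f v := by
  unfold bform
  rw [← Finset.sum_add_distrib]; congr 1; funext x
  rw [← Finset.sum_add_distrib]; congr 1; funext y; simp; ring

lemma bform_right_smul (M : CoxeterMatrix B) (f : B → ℝ) (c : ℝ) (v : B → ℝ) :
    bform M f (c • v) = c * bform M f v := by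
  unfold bform
  rw [Finset.mul_sum]; congr 1; funext x
  rw [Finset.mul_sum]; congr 1; funext y; simp; ring

variable {M : CoxeterMatrix B} {cs : CoxeterSystem M W}
variable {ρ : W →* (B → ℝ) ≃ₗ[ℝ] (B → ℝ)}

lemma rho_rho (ρ : W →* (B → ℝ) ≃ₗ[ℝ] (B → ℝ)) (a b : W) (v : B → ℝ) :
    ρ a (ρ b v) = ρ (a * b) v := by rw [map_mul]; rfl

lemma rho_one (ρ : W →* (B → ℝ) ≃ₗ[ℝ] (B → ℝ)) (v : B → ℝ) : ρ 1 v = v := by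
  rw [map_one]; rfl

lemma rho_simple_sroot (hρ : IsGeomRep M cs ρ) (i : B) (a b : ℝ) (j : B) (hij : i ≠ j) :
    ρ (cs.simple i) (a • sroot i + b • sroot j)
      = (2 * ccos (M i j) * b - a) • sroot i + b • sroot j := by
  rw [hρ i]
  have hb : bform M (sroot i) (a • sroot i + b • sroot j) = a + b * cB M i j := by
    rw [bform_right_add, bform_right_smul, bform_right_smul, bform_sroot_sroot,
      bform_sroot_sroot, cB_diag]; ring
  rw [hb]
  funext x
  simp only [Pi.add_apply, Pi.sub_apply, Pi.smul_apply, smul_eq_mul, sroot, cB_eq]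
  ring

lemma rho_simple_sroot_self (hρ : IsGeomRep M cs ρ) (i : B) :
    ρ (cs.simple i) (sroot i) = - sroot i := by
  rw [hρ i, bform_sroot_sroot, cB_diag]
  funext x
  simp only [Pi.sub_apply, Pi.smul_apply, Pi.neg_apply, smul_eq_mul]
  ring

end Alg


section Pos
variable [Fintype B] [DecidableEq B] {M : CoxeterMatrix B} {cs : CoxeterSystem M W}
variable {ρ : W →* (B → ℝ) ≃ₗ[ℝ] (B → ℝ)}

open CoxeterSystem

lemma dih (hρ : IsGeomRep M cs ρ) (i j : B) (hij : i ≠ j) (k : ℕ) :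
    ρ (cs.wordProd (alternatingWord i j k)) (sroot i)
      = (if Even k then chebS (M i j) (k+1) else chebS (M i j) k) • sroot i
        + (if Even k then chebS (M i j) k else chebS (M i j) (k+1)) • sroot j := by
  have hm : M i j = 0 ∨ 2 ≤ M i j := by
    have := M.off_diagonal i j hij; omega
  induction k with
  | zero =>
      rw [if_pos Even.zero, if_pos Even.zero]
      have : alternatingWord i j 0 = [] := rfl
      rw [this, cs.wordProd_nil, rho_one, chebS_zero, chebS_one hm]
      funext x; simp
  | succ k ih =>
      rw [alternatingWord_succ', cs.wordProd_cons, ← rho_rho, ih]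
      rcases Nat.even_or_odd k with hk | hk
      · have hk1 : ¬ Even (k+1) := by simp [Nat.even_add_one, hk]
        rw [if_pos hk, if_pos hk, if_pos hk, if_neg hk1, if_neg hk1]
        have comm : chebS (M i j) (k+1) • sroot i + chebS (M i j) k • sroot j
            = chebS (M i j) k • sroot j + chebS (M i j) (k+1) • sroot i := add_comm _ _
        rw [comm, rho_simple_sroot hρ j _ _ i hij.symm, M.symmetric j i,
          show k+1+1 = k+2 from rfl, chebS_rec hm k]
        exact add_comm _ _
      · have hnk : ¬ Even k := Nat.not_even_iff_odd.mpr hk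
        have hk1 : Even (k+1) := Nat.even_add_one.mpr hnk
        rw [if_neg hnk, if_neg hnk, if_neg hnk, if_pos hk1, if_pos hk1]
        rw [rho_simple_sroot hρ i _ _ j hij,
          show k+1+1 = k+2 from rfl, chebS_rec hm k]

lemma dec (cs : CoxeterSystem M W) : ∀ (q : ℕ) (w : W), cs.length w ≤ q → ∀ i j : B, i ≠ j →
    ¬ cs.IsRightDescent w i → cs.IsRightDescent w j →
    ∃ (w' : W) (k : ℕ), 1 ≤ k ∧ w = w' * cs.wordProd (alternatingWord i j k) ∧
      cs.length w = cs.length w' + k ∧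
      ¬ cs.IsRightDescent w' i ∧ ¬ cs.IsRightDescent w' j := by
  intro q
  induction q with
  | zero =>
      intro w hw i j hij hi hj
      have hw1 : w = 1 := cs.length_eq_zero_iff.mp (Nat.le_zero.mp hw)
      rw [hw1] at hj
      exact absurd hj (cs.not_isRightDescent_one j)
  | succ q ih =>
      intro w hw i j hij hi hj
      have hlen : cs.length (w * cs.simple j) + 1 = cs.length w := cs.isRightDescent_iff.mp hj
      have hw₁ : cs.length (w * cs.simple j) ≤ q := by omega
      have hj₁ : ¬ cs.IsRightDescent (w * cs.simple j) j :=
        (cs.isRightDescent_iff_not_isRightDescent_mul).mp hj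
      have hww : (w * cs.simple j) * cs.simple j = w := cs.simple_mul_simple_cancel_right j
      by_cases hi₁ : cs.IsRightDescent (w * cs.simple j) i
      · obtain ⟨w', k, hk1, heq, hlen', hdj, hdi⟩ :=
          ih (w * cs.simple j) hw₁ j i hij.symm hj₁ hi₁
        refine ⟨w', k+1, by omega, ?_, by omega, hdi, hdj⟩
        rw [alternatingWord_succ, cs.wordProd_concat, ← mul_assoc, ← heq]
        exact hww.symm
      · refine ⟨w * cs.simple j, 1, le_refl 1, ?_, by omega, hi₁, hj₁⟩
        have h1 : alternatingWord i j 1 = [j] := rfl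
        rw [h1, cs.wordProd_singleton]
        exact hww.symm

lemma sroot_nonneg (i x : B) : 0 ≤ sroot i x := by
  unfold sroot
  rw [Pi.single_apply]
  split <;> norm_num

lemma pos_aux (hρ : IsGeomRep M cs ρ) :
    ∀ (q : ℕ) (w : W), cs.length w ≤ q → ∀ i : B, ¬ cs.IsRightDescent w i →
      ∀ x : B, 0 ≤ ρ w (sroot i) x := by
  intro q
  induction q with
  | zero =>
      intro w hw i _ x
      have hw1 : w = 1 := cs.length_eq_zero_iff.mp (Nat.le_zero.mp hw)
      rw [hw1, rho_one]
      exact sroot_nonneg i x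
  | succ q ih =>
      intro w hw i hi x
      by_cases h1 : w = 1
      · rw [h1, rho_one]; exact sroot_nonneg i x
      · obtain ⟨j, hj⟩ := cs.exists_rightDescent_of_ne_one h1
        have hij : i ≠ j := by rintro rfl; exact hi hj
        obtain ⟨w', k, hk1, heq, hlen, hdi, hdj⟩ :=
          dec cs (cs.length w) w le_rfl i j hij hi hj
        have hw' : cs.length w' ≤ q := by omega
        have hasc : cs.length (w * cs.simple i) = cs.length w + 1 :=
          cs.not_isRightDescent_iff.mp hi
        have heq2 : w * cs.simple i = w' * cs.wordProd (alternatingWord j i (k+1)) := by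
          rw [alternatingWord_succ, cs.wordProd_concat, ← mul_assoc, ← heq]
        have hmul := cs.length_mul_le w' (cs.wordProd (alternatingWord j i (k+1)))
        have hle := cs.length_wordProd_le (alternatingWord j i (k+1))
        rw [length_alternatingWord] at hle
        have hge : (k+1 : ℕ) ≤ cs.length (cs.wordProd (alternatingWord j i (k+1))) := by
          rw [heq2] at hasc; omega
        have hmle : M j i = 0 ∨ k + 1 ≤ M j i := by
          by_cases hM0 : M j i = 0
          · left; exact hM0
          · right
            by_contra hMk
            push_neg at hMk
            exact cs.not_isReduced_alternatingWord j i hM0 hMk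
              (by unfold CoxeterSystem.IsReduced; rw [length_alternatingWord]; omega)
        have hm' : M i j = 0 ∨ k + 1 ≤ M i j := by rw [M.symmetric i j]; exact hmle
        have hm2 : M i j = 0 ∨ 2 ≤ M i j := by
          have := M.off_diagonal i j hij; omega
        rw [heq, ← rho_rho, dih hρ i j hij k, map_add, map_smul, map_smul]
        simp only [Pi.add_apply, Pi.smul_apply, smul_eq_mul]
        have hA : 0 ≤ (if Even k then chebS (M i j) (k+1) else chebS (M i j) k) := by
          split <;>
            exact chebS_nonneg hm2 (by rcases hm' with h | h; exacts [Or.inl h, Or.inr (by omega)])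
        have hB : 0 ≤ (if Even k then chebS (M i j) k else chebS (M i j) (k+1)) := by
          split <;>
            exact chebS_nonneg hm2 (by rcases hm' with h | h; exacts [Or.inl h, Or.inr (by omega)])
        exact add_nonneg (mul_nonneg hA (ih w' hw' i hdi x)) (mul_nonneg hB (ih w' hw' j hdj x))

/-- Root positivity: if `ℓ(w sᵢ) > ℓ(w)` then all coordinates of `w · αᵢ` are nonnegative. -/
lemma rho_sroot_nonneg (hρ : IsGeomRep M cs ρ) (w : W) (i : B)
    (h : ¬ cs.IsRightDescent w i) (x : B) : 0 ≤ ρ w (sroot i) x :=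
  pos_aux hρ (cs.length w) w le_rfl i h x

end Pos

section Glue
variable [Fintype B] [DecidableEq B] {M : CoxeterMatrix B} {cs : CoxeterSystem M W}
variable {ρ πc : W →* (B → ℝ) ≃ₗ[ℝ] (B → ℝ)}

lemma pair_contra (hπ : IsContraRep ρ πc) (w : W) (f β : B → ℝ) :
    pair (πc w f) β = pair f (ρ w⁻¹ β) := by
  have h := hπ w f (ρ w⁻¹ β)
  rw [rho_rho, mul_inv_cancel, rho_one] at h
  exact h

lemma pair_pos_of_dom (hρ : IsGeomRep M cs ρ) (f₀ : B → ℝ) (hf₀ : f₀ ∈ domCham B)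
    (w : W) (i : B) (h : ¬ cs.IsRightDescent w i) : 0 < pair f₀ (ρ w (sroot i)) := by
  have hnn : ∀ x, 0 ≤ ρ w (sroot i) x := rho_sroot_nonneg hρ w i h
  have hf : ∀ x, 0 < f₀ x := by
    intro x
    have := hf₀ x
    rwa [pair_sroot] at this
  have hv0 : ∃ x, ρ w (sroot i) x ≠ 0 := by
    by_contra hc
    push_neg at hc
    have hz : ρ w (sroot i) = 0 := funext hc
    have h2 : ρ w⁻¹ (ρ w (sroot i)) = sroot i := by
      rw [rho_rho, inv_mul_cancel, rho_one]
    rw [hz, map_zero] at h2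
    have h3 := congrFun h2 i
    simp [sroot] at h3
  unfold pair
  apply Finset.sum_pos' (fun x _ => mul_nonneg (hf x).le (hnn x))
  obtain ⟨x, hx⟩ := hv0
  exact ⟨x, Finset.mem_univ x, mul_pos (hf x) (lt_of_le_of_ne (hnn x) (Ne.symm hx))⟩

end Glue


section Words

variable {M : CoxeterMatrix B}

/-- The element `x′_n = x s₁ ⋯ ŝ_{i₁} ⋯ ŝ_{i_{n−1}} ⋯ s_{i_n − 1}`: the product of `x` and
the first `i_n - 1` letters of the word `ω`, with the letters at positions `i₁, …, i_{n−1}`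
omitted. (Positions are recorded `0`-based: the index `ι n : Fin ω.length` corresponds to
the letter `s_{i_{n+1}}` of the paper.) -/
def omitProd (cs : CoxeterSystem M W) (x : W) (ω : List B) {p : ℕ}
    (ι : Fin p → Fin ω.length) (n : Fin p) : W :=
  x * cs.wordProd (((List.finRange ω.length).filter
      (fun j : Fin ω.length => decide ((j : ℕ) < (ι n : ℕ) ∧ ∀ m : Fin p, m < n → j ≠ ι m))).map ω.get)

/-- The condition `ℓ(x′_n s_{i_n}) < ℓ(x′_n)` for all `n = 1, …, p`. -/
def DescCond (cs : CoxeterSystem M W) (x : W) (ω : List B) {p : ℕ}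
    (ι : Fin p → Fin ω.length) : Prop :=
  ∀ n : Fin p, cs.length (omitProd cs x ω ι n * cs.simple (ω.get (ι n))) <
    cs.length (omitProd cs x ω ι n)

/-- The element `x_n := x s₁ ⋯ s_{i_n − 1}`. -/
def xseq (cs : CoxeterSystem M W) (x : W) (ω : List B) {p : ℕ}
    (ι : Fin p → Fin ω.length) (n : Fin p) : W :=
  x * cs.wordProd (ω.take (ι n))

/-- The reflection `σ_n := x_n s_{i_n} x_n⁻¹`. -/
def sigmaseq (cs : CoxeterSystem M W) (x : W) (ω : List B) {p : ℕ}
    (ι : Fin p → Fin ω.length) (n : Fin p) : W :=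
  xseq cs x ω ι n * cs.simple (ω.get (ι n)) * (xseq cs x ω ι n)⁻¹

/-- The element `e_n := σ_n σ_{n−1} ⋯ σ₁`, with `e₀ = e`. -/
def eseq (cs : CoxeterSystem M W) (x : W) (ω : List B) {p : ℕ}
    (ι : Fin p → Fin ω.length) : ℕ → W
  | 0 => 1
  | n + 1 => (if h : n < p then sigmaseq cs x ω ι ⟨n, h⟩ else 1) * eseq cs x ω ι n

/-- A root of the hyperplane `H_n` corresponding to the reflection `σ_n`, namely
`x_n · α_{s_{i_n}}`. -/
def rootseq [Fintype B] [DecidableEq B] (cs : CoxeterSystem M W)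
    (ρ : W →* (B → ℝ) ≃ₗ[ℝ] (B → ℝ)) (x : W) (ω : List B) {p : ℕ}
    (ι : Fin p → Fin ω.length) (n : Fin p) : B → ℝ :=
  ρ (xseq cs x ω ι n) (sroot (ω.get (ι n)))

/-- The hyperplane `H_n ∈ 𝔓` corresponding to the reflection `σ_n`. -/
def Hseq [Fintype B] [DecidableEq B] (cs : CoxeterSystem M W)
    (ρ : W →* (B → ℝ) ≃ₗ[ℝ] (B → ℝ)) (x : W) (ω : List B) {p : ℕ}
    (ι : Fin p → Fin ω.length) (n : Fin p) : Set (B → ℝ) :=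
  hyp (rootseq cs ρ x ω ι n)

end Words


/-- for `1 ≤ n ≤ p`, the chambers `x₁C` and `x_nC` lie on the same side of
`H_n`, while `H_n` separates `x₁C` and `x_n s_{i_n} C`. -/
theorem statement11 [Fintype B] [DecidableEq B] {M : CoxeterMatrix B}
    (cs : CoxeterSystem M W) (ρ π : W →* (B → ℝ) ≃ₗ[ℝ] (B → ℝ))
    (hρ : IsGeomRep M cs ρ) (hπ : IsContraRep ρ π)
    (x y : W) (ω : List B) (hred : cs.IsReduced ω) (hy : cs.wordProd ω = y)
    (p : ℕ) (ι : Fin p → Fin ω.length) (hι : StrictMono ι)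
    (hdesc : DescCond cs x ω ι)
    (n : ℕ) (hn1 : 1 ≤ n) (hnp : n ≤ p) :
    (∀ f ∈ cham π (xseq cs x ω ι ⟨0, by omega⟩),
      ∀ g ∈ cham π (xseq cs x ω ι ⟨n - 1, by omega⟩),
        ¬ SepPt (rootseq cs ρ x ω ι ⟨n - 1, by omega⟩) f g) ∧
    SepSets (rootseq cs ρ x ω ι ⟨n - 1, by omega⟩)
      (cham π (xseq cs x ω ι ⟨0, by omega⟩))
      (cham π (xseq cs x ω ι ⟨n - 1, by omega⟩ *
        cs.simple (ω.get (ι ⟨n - 1, by omega⟩)))) := by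
  classical
  set n1 : Fin p := ⟨n - 1, by omega⟩ with hn1def
  set n0 : Fin p := ⟨0, by omega⟩ with hn0def
  set d0 : Fin ω.length := ι n0 with hd0def
  set d1 : Fin ω.length := ι n1 with hd1def
  set j : B := ω.get d1 with hjdef
  have h00 : (d0 : ℕ) ≤ (d1 : ℕ) := by
    have : n0 ≤ n1 := by
      rw [hn0def, hn1def, Fin.mk_le_mk]
      omega
    exact hι.monotone this
  have hd1lt : (d1 : ℕ) < ω.length := d1.isLt
  -- list manipulations
  have htake1 : ω.take ((d1 : ℕ) + 1) = ω.take (d1 : ℕ) ++ [ω.get d1] := by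
    rw [List.take_succ, List.getElem?_eq_getElem hd1lt]
    simp [List.get_eq_getElem]
  have hsplit : ω.take (d1 : ℕ) = ω.take (d0 : ℕ) ++ (ω.take (d1 : ℕ)).drop (d0 : ℕ) := by
    have h := (List.take_append_drop (d0 : ℕ) (ω.take (d1 : ℕ))).symm
    rwa [List.take_take, min_eq_left h00] at h
  set L : List B := (ω.take ((d1 : ℕ) + 1)).drop (d0 : ℕ) with hLdef
  have hL : L = (ω.take (d1 : ℕ)).drop (d0 : ℕ) ++ [ω.get d1] := by
    rw [hLdef, htake1, List.drop_append_of_le_length (by rw [List.length_take]; omega)]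
  have hredL : cs.IsReduced L := CoxeterSystem.IsReduced.drop (CoxeterSystem.IsReduced.take hred _) _
  have hLlen : L.length = (d1 : ℕ) + 1 - (d0 : ℕ) := by
    rw [hLdef, List.length_drop, List.length_take]
    omega
  set u : W := cs.wordProd ((ω.take (d1 : ℕ)).drop (d0 : ℕ)) with hudef
  have hulen : cs.length u ≤ (d1 : ℕ) - (d0 : ℕ) := by
    have h := cs.length_wordProd_le ((ω.take (d1 : ℕ)).drop (d0 : ℕ))
    rw [List.length_drop, List.length_take, ← hudef] at h
    omega
  have hπL : cs.wordProd L = u * cs.simple j := by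
    rw [hL, cs.wordProd_append, cs.wordProd_singleton, hudef, hjdef]
  have husj : cs.length (u * cs.simple j) = (d1 : ℕ) + 1 - (d0 : ℕ) := by
    have h5 : cs.length (cs.wordProd L) = L.length := hredL
    rw [hπL, hLlen] at h5
    exact h5
  have hnd : ¬ cs.IsRightDescent u j := by
    show ¬ (cs.length (u * cs.simple j) < cs.length u)
    omega
  -- group manipulations
  have hx01 : xseq cs x ω ι n1 = xseq cs x ω ι n0 * u := by
    unfold xseq
    rw [hsplit, cs.wordProd_append, hudef, mul_assoc]
  -- the three sign computations
  have hApos : ∀ f ∈ cham π (xseq cs x ω ι n0), 0 < pair f (rootseq cs ρ x ω ι n1) := by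
    rintro f ⟨f₀, hf₀, rfl⟩
    rw [pair_contra hπ]
    have hre : ρ (xseq cs x ω ι n0)⁻¹ (ρ (xseq cs x ω ι n1) (sroot j)) = ρ u (sroot j) := by
      rw [rho_rho]
      congr 1
      rw [hx01]
      group
    unfold rootseq
    rw [← hjdef, hre]
    exact pair_pos_of_dom hρ f₀ hf₀ u j hnd
  have hBpos : ∀ g ∈ cham π (xseq cs x ω ι n1), 0 < pair g (rootseq cs ρ x ω ι n1) := by
    rintro g ⟨g₀, hg₀, rfl⟩
    unfold rootseq
    rw [pair_contra hπ, rho_rho, inv_mul_cancel, rho_one, ← hjdef, pair_sroot]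
    have := hg₀ j
    rwa [pair_sroot] at this
  have hCneg : ∀ h ∈ cham π (xseq cs x ω ι n1 * cs.simple j),
      pair h (rootseq cs ρ x ω ι n1) < 0 := by
    rintro h ⟨h₀, hh₀, rfl⟩
    unfold rootseq
    rw [pair_contra hπ, rho_rho, ← hjdef]
    have hgrp : (xseq cs x ω ι n1 * cs.simple j)⁻¹ * xseq cs x ω ι n1 = cs.simple j := by
      rw [mul_inv_rev, cs.inv_simple]
      group
    rw [hgrp, rho_simple_sroot_self hρ, pair_neg, pair_sroot]
    have := hh₀ j
    rw [pair_sroot] at this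
    linarith
  constructor
  · intro f hf g hg
    exact (mul_pos (hApos f hf) (hBpos g hg)).asymm
  · constructor
    · intro f hf
      rcases hf with hf | hf
      · exact (hApos f hf).ne'
      · exact (hCneg f hf).ne
    · intro f hf g hg
      exact mul_neg_of_pos_of_neg (hApos f hf) (hCneg g hg)

end PaperBound
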